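/- Let h > 0 and ν > 3. Then lim_{λ → 0⁻} ∑_{(n,m) ∈ ℤ×ℤ} (1+n²)^{−ν/2}·(1+m²)^{−ν/2} · ( exp(−2·|n−m|·arsinh((h/2)·√(−λ))) / (√(−λ)·√(4/h² − λ)) − h/(2·√(−λ)) + (h²/2)·|n−m| )² = 0; that is, as λ increases to 0 through negative values, the weighted square-summed difference between the boundary resolvent kernel exp(−2·|n−m|·arsinh((h/2)·√(−λ)))/(√(−λ)·√(4/h²−λ)), the singular kernel h/(2·√(−λ)), and the kernel −(h²/2)·|n−m| tends to 0. -/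

import Mathlib

open Filter

set_option maxHeartbeats 1000000

lemma aux_exp_lb {t : ℝ} : 1 - t ≤ Real.exp (-t) := by
  have := Real.add_one_le_exp (-t); linarith

lemma aux_exp_ub {t : ℝ} (ht : 0 ≤ t) : Real.exp (-t) ≤ 1 - t + t ^ 2 := by
  have h1 : (0:ℝ) < 1 + t := by linarith
  have h2 : Real.exp (-t) ≤ (1 + t)⁻¹ := by
    rw [Real.exp_neg]
    exact inv_anti₀ h1 (by linarith [Real.add_one_le_exp t])
  have h3 : (1 + t)⁻¹ ≤ 1 - t + t ^ 2 := by
    rw [inv_le_iff_one_le_mul₀ h1]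
    nlinarith
  linarith

lemma aux_arsinh_le {x : ℝ} (hx : 0 ≤ x) : Real.arsinh x ≤ x := by
  rcases eq_or_lt_of_le hx with h | h
  · simp [← h]
  · have := Real.self_lt_sinh_iff.mpr h
    calc Real.arsinh x ≤ Real.arsinh (Real.sinh x) := Real.arsinh_le_arsinh.mpr this.le
    _ = x := Real.arsinh_sinh x

lemma aux_sinh_ub {t : ℝ} (h0 : 0 ≤ t) (h1 : t ≤ 1) : Real.sinh t ≤ t + t ^ 3 := by
  have habs : |t| ≤ 1 := by rwa [abs_of_nonneg h0]
  have habs' : |(-t)| ≤ 1 := by rwa [abs_neg]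
  have e1 := Real.exp_bound habs (by norm_num : 0 < 3)
  have e2 := Real.exp_bound habs' (by norm_num : 0 < 3)
  rw [abs_le] at e1 e2
  norm_num [Finset.sum_range_succ, Nat.factorial] at e1 e2
  rw [Real.sinh_eq]
  rw [abs_of_nonneg h0] at e1 e2
  nlinarith [e1.1, e1.2, e2.1, e2.2, pow_nonneg h0 3]

lemma aux_arsinh_ge {x : ℝ} (h0 : 0 ≤ x) (h1 : x ≤ 1) : x - x ^ 3 ≤ Real.arsinh x := by
  have hcube : x ^ 3 ≤ x := by
    nlinarith [mul_nonneg (mul_nonneg h0 (sub_nonneg.mpr h1)) (by linarith : (0:ℝ) ≤ 1 + x)]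
  have ht0 : 0 ≤ x - x ^ 3 := by linarith
  have ht1 : x - x ^ 3 ≤ 1 := by nlinarith [pow_nonneg h0 3]
  have hx3 : (x - x ^ 3) ^ 3 ≤ x ^ 3 := pow_le_pow_left₀ ht0 (by linarith [pow_nonneg h0 3]) 3
  have := aux_sinh_ub ht0 ht1
  have hs : Real.sinh (x - x ^ 3) ≤ x := by nlinarith
  calc x - x ^ 3 = Real.arsinh (Real.sinh (x - x ^ 3)) := (Real.arsinh_sinh _).symm
  _ ≤ Real.arsinh x := Real.arsinh_le_arsinh.mpr hs

section abstract
variable {h k s x a E q : ℝ}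

lemma aux_T3 (hh : 0 < h) (hs0 : 0 < s) (hq0 : 0 < q)
    (hqlb : 2 / h ≤ q) (hhq_lb : 2 ≤ h * q) (hhq_ub : h * q ≤ 2 + h ^ 2 * s ^ 2 / 4) :
    |1 / (s * q) - h / (2 * s)| ≤ h ^ 3 * s / 16 := by
  have hid : 1 / (s * q) - h / (2 * s) = (2 - h * q) / (2 * s * q) := by
    field_simp
  rw [hid, abs_div, abs_of_pos (by positivity : (0:ℝ) < 2 * s * q)]
  rw [div_le_iff₀ (by positivity)]
  have h1 : |2 - h * q| ≤ h ^ 2 * s ^ 2 / 4 := by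
    rw [abs_sub_comm, abs_of_nonneg (by linarith)]; linarith
  have h2 : 4 * s / h ≤ 2 * s * q := by
    have := mul_le_mul_of_nonneg_left hqlb (by positivity : (0:ℝ) ≤ 2 * s)
    calc 4 * s / h = 2 * s * (2 / h) := by ring
    _ ≤ 2 * s * q := this
  calc |2 - h * q| ≤ h ^ 2 * s ^ 2 / 4 := h1
  _ = h ^ 3 * s / 16 * (4 * s / h) := by field_simp; ring
  _ ≤ h ^ 3 * s / 16 * (2 * s * q) := mul_le_mul_of_nonneg_left h2 (by positivity)

lemma aux_crude (hh : 0 < h) (hk : 0 ≤ k) (hs0 : 0 < s) (hs1 : s ≤ 1)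
    (hx : x = h / 2 * s) (ha0 : 0 ≤ a) (hax : a ≤ x)
    (hE0 : 0 < E) (hE1 : E ≤ 1) (hElb : 1 - 2 * k * a ≤ E)
    (hq0 : 0 < q) (hqlb : 2 / h ≤ q) (hhq_lb : 2 ≤ h * q)
    (hhq_ub : h * q ≤ 2 + h ^ 2 * s ^ 2 / 4) :
    |E / (s * q) - h / (2 * s) + h ^ 2 / 2 * k| ≤ h ^ 3 / 16 + h ^ 2 * k := by
  have hT3 := aux_T3 hh hs0 hq0 hqlb hhq_lb hhq_ub
  have hdec : E / (s * q) - h / (2 * s) + h ^ 2 / 2 * k =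
      E * (1 / (s * q) - h / (2 * s)) + ((h / (2 * s)) * (E - 1) + h ^ 2 / 2 * k) := by
    field_simp; ring
  have hEa : 1 - E ≤ k * h * s := by nlinarith
  have hbr_ub : (h / (2 * s)) * (E - 1) + h ^ 2 / 2 * k ≤ h ^ 2 / 2 * k := by
    have : (h / (2 * s)) * (E - 1) ≤ 0 :=
      mul_nonpos_of_nonneg_of_nonpos (by positivity) (by linarith)
    linarith
  have hbr_lb : 0 ≤ (h / (2 * s)) * (E - 1) + h ^ 2 / 2 * k := by
    have h1 : (h / (2 * s)) * (1 - E) ≤ (h / (2 * s)) * (k * h * s) :=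
      mul_le_mul_of_nonneg_left hEa (by positivity)
    have h2 : (h / (2 * s)) * (k * h * s) = h ^ 2 / 2 * k := by field_simp
    nlinarith
  have h1 : |E * (1 / (s * q) - h / (2 * s))| ≤ h ^ 3 * s / 16 := by
    rw [abs_mul, abs_of_pos hE0]
    calc E * |1 / (s * q) - h / (2 * s)| ≤ 1 * (h ^ 3 * s / 16) :=
      mul_le_mul hE1 hT3 (abs_nonneg _) zero_le_one
    _ = h ^ 3 * s / 16 := one_mul _
  rw [hdec]
  calc |E * (1 / (s * q) - h / (2 * s)) + ((h / (2 * s)) * (E - 1) + h ^ 2 / 2 * k)|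
      ≤ |E * (1 / (s * q) - h / (2 * s))| + |(h / (2 * s)) * (E - 1) + h ^ 2 / 2 * k| :=
        abs_add_le _ _
  _ ≤ h ^ 3 * s / 16 + h ^ 2 / 2 * k := by
      have : |(h / (2 * s)) * (E - 1) + h ^ 2 / 2 * k| ≤ h ^ 2 / 2 * k := by
        rw [abs_of_nonneg hbr_lb]; exact hbr_ub
      linarith
  _ ≤ h ^ 3 / 16 + h ^ 2 * k := by
      nlinarith [mul_nonneg (pow_nonneg hh.le 3) (sub_nonneg.mpr hs1), mul_nonneg (sq_nonneg h) hk]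

lemma aux_fine (hh : 0 < h) (hk : 0 ≤ k) (hs0 : 0 < s) (hs1 : s ≤ 1)
    (hx : x = h / 2 * s) (ha0 : 0 ≤ a) (hax : a ≤ x) (hax3 : x - x ^ 3 ≤ a)
    (hE0 : 0 < E) (hE1 : E ≤ 1) (hElb : 1 - 2 * k * a ≤ E)
    (hEub : E ≤ 1 - 2 * k * a + (2 * k * a) ^ 2)
    (hq0 : 0 < q) (hqlb : 2 / h ≤ q) (hhq_lb : 2 ≤ h * q)
    (hhq_ub : h * q ≤ 2 + h ^ 2 * s ^ 2 / 4) :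
    |E / (s * q) - h / (2 * s) + h ^ 2 / 2 * k| ≤
      (h ^ 3 / 16 + h ^ 3 * k ^ 2 / 2 + h ^ 4 * k / 8) * s := by
  have hT3 := aux_T3 hh hs0 hq0 hqlb hhq_lb hhq_ub
  have hdec : E / (s * q) - h / (2 * s) + h ^ 2 / 2 * k =
      E * (1 / (s * q) - h / (2 * s)) + (h / (2 * s)) * (E - 1 + 2 * k * a)
        + (h * k / s) * (x - a) := by
    rw [hx]; field_simp; ring
  have h1 : |E * (1 / (s * q) - h / (2 * s))| ≤ h ^ 3 * s / 16 := by
    rw [abs_mul, abs_of_pos hE0]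
    calc E * |1 / (s * q) - h / (2 * s)| ≤ 1 * (h ^ 3 * s / 16) :=
      mul_le_mul hE1 hT3 (abs_nonneg _) zero_le_one
    _ = h ^ 3 * s / 16 := one_mul _
  have hka : 2 * k * a ≤ k * h * s := by nlinarith
  have hka0 : 0 ≤ 2 * k * a := by positivity
  have h2abs : |E - 1 + 2 * k * a| ≤ (k * h * s) ^ 2 := by
    rw [abs_le]
    constructor
    · nlinarith [sq_nonneg (k * h * s)]
    · nlinarith [sq_nonneg (2 * k * a), sq_nonneg (k * h * s)]
  have h2 : |(h / (2 * s)) * (E - 1 + 2 * k * a)| ≤ h ^ 3 * k ^ 2 * s / 2 := by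
    rw [abs_mul, abs_of_pos (by positivity : (0:ℝ) < h / (2 * s))]
    have := mul_le_mul_of_nonneg_left h2abs (by positivity : (0:ℝ) ≤ h / (2 * s))
    have heq : (h / (2 * s)) * (k * h * s) ^ 2 = h ^ 3 * k ^ 2 * s / 2 := by
      field_simp
    linarith
  have hx3 : 0 ≤ x - a := by linarith
  have hx3' : x - a ≤ x ^ 3 := by linarith
  have h3 : |(h * k / s) * (x - a)| ≤ h ^ 4 * k * s ^ 2 / 8 := by
    rw [abs_mul, abs_of_nonneg hx3, abs_of_nonneg (by positivity : (0:ℝ) ≤ h * k / s)]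
    have := mul_le_mul_of_nonneg_left hx3' (by positivity : (0:ℝ) ≤ h * k / s)
    have heq : (h * k / s) * x ^ 3 = h ^ 4 * k * s ^ 2 / 8 := by
      rw [hx]; field_simp; ring
    linarith
  rw [hdec]
  have habs := abs_add_le (E * (1 / (s * q) - h / (2 * s)) + (h / (2 * s)) * (E - 1 + 2 * k * a))
    ((h * k / s) * (x - a))
  have habs2 := abs_add_le (E * (1 / (s * q) - h / (2 * s))) ((h / (2 * s)) * (E - 1 + 2 * k * a))
  have hs2 : h ^ 4 * k * s ^ 2 / 8 ≤ h ^ 4 * k * s / 8 := by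
    nlinarith [mul_nonneg (mul_nonneg (pow_nonneg hh.le 4) hk) hs0.le]
  nlinarith [mul_nonneg (mul_nonneg (pow_nonneg hh.le 3) (sq_nonneg k)) hs0.le]

end abstract

lemma aux_q_facts {h s : ℝ} (hh : 0 < h) (hs0 : 0 < s) :
    0 < Real.sqrt (4 / h ^ 2 + s ^ 2) ∧ 2 / h ≤ Real.sqrt (4 / h ^ 2 + s ^ 2) ∧
    2 ≤ h * Real.sqrt (4 / h ^ 2 + s ^ 2) ∧
    h * Real.sqrt (4 / h ^ 2 + s ^ 2) ≤ 2 + h ^ 2 * s ^ 2 / 4 := by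
  have hD0 : (0:ℝ) < 4 / h ^ 2 + s ^ 2 := by positivity
  have hq0 : 0 < Real.sqrt (4 / h ^ 2 + s ^ 2) := Real.sqrt_pos.mpr hD0
  have hqlb : 2 / h ≤ Real.sqrt (4 / h ^ 2 + s ^ 2) := by
    rw [show (2 : ℝ) / h = Real.sqrt ((2 / h) ^ 2) from (Real.sqrt_sq (by positivity)).symm]
    apply Real.sqrt_le_sqrt
    rw [div_pow]
    norm_num
    nlinarith [sq_nonneg s]
  have hhq : h * Real.sqrt (4 / h ^ 2 + s ^ 2) = Real.sqrt (4 + h ^ 2 * s ^ 2) := by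
    rw [show (4 : ℝ) + h ^ 2 * s ^ 2 = h ^ 2 * (4 / h ^ 2 + s ^ 2) by field_simp,
      Real.sqrt_mul (by positivity), Real.sqrt_sq hh.le]
  refine ⟨hq0, hqlb, ?_, ?_⟩
  · rw [hhq, show (2 : ℝ) = Real.sqrt (2 ^ 2) from (Real.sqrt_sq (by norm_num)).symm]
    exact Real.sqrt_le_sqrt (by nlinarith [sq_nonneg (h * s)])
  · rw [hhq, show (2 : ℝ) + h ^ 2 * s ^ 2 / 4 = Real.sqrt ((2 + h ^ 2 * s ^ 2 / 4) ^ 2) from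
      (Real.sqrt_sq (by positivity)).symm]
    exact Real.sqrt_le_sqrt (by nlinarith [sq_nonneg (h ^ 2 * s ^ 2)])

lemma aux_wrap (h k : ℝ) (hh : 0 < h) (hk : 0 ≤ k) {l : ℝ} (hl0 : l < 0) (hl1 : -1 ≤ l) :
    |Real.exp (-2 * k * Real.arsinh (h / 2 * Real.sqrt (-l))) /
        (Real.sqrt (-l) * Real.sqrt (4 / h ^ 2 - l)) -
      h / (2 * Real.sqrt (-l)) + h ^ 2 / 2 * k| ≤ h ^ 3 / 16 + h ^ 2 * k ∧
    (h / 2 * Real.sqrt (-l) ≤ 1 →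
      |Real.exp (-2 * k * Real.arsinh (h / 2 * Real.sqrt (-l))) /
          (Real.sqrt (-l) * Real.sqrt (4 / h ^ 2 - l)) -
        h / (2 * Real.sqrt (-l)) + h ^ 2 / 2 * k| ≤
        (h ^ 3 / 16 + h ^ 3 * k ^ 2 / 2 + h ^ 4 * k / 8) * Real.sqrt (-l)) := by
  have hs0 : 0 < Real.sqrt (-l) := Real.sqrt_pos.mpr (by linarith)
  have hs1 : Real.sqrt (-l) ≤ 1 := by
    rw [show (1:ℝ) = Real.sqrt 1 from Real.sqrt_one.symm]
    exact Real.sqrt_le_sqrt (by linarith)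
  have hsq : Real.sqrt (-l) ^ 2 = -l := Real.sq_sqrt (by linarith)
  have hrw : 4 / h ^ 2 - l = 4 / h ^ 2 + Real.sqrt (-l) ^ 2 := by rw [hsq]; ring
  rw [hrw]
  have hx0 : (0:ℝ) ≤ h / 2 * Real.sqrt (-l) := by positivity
  have ha0 : 0 ≤ Real.arsinh (h / 2 * Real.sqrt (-l)) := Real.arsinh_nonneg_iff.mpr hx0
  have hax : Real.arsinh (h / 2 * Real.sqrt (-l)) ≤ h / 2 * Real.sqrt (-l) := aux_arsinh_le hx0
  have hkt : (0:ℝ) ≤ 2 * k * Real.arsinh (h / 2 * Real.sqrt (-l)) := by positivity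
  have hEt : Real.exp (-2 * k * Real.arsinh (h / 2 * Real.sqrt (-l))) =
      Real.exp (-(2 * k * Real.arsinh (h / 2 * Real.sqrt (-l)))) := by ring_nf
  have hE0 : 0 < Real.exp (-2 * k * Real.arsinh (h / 2 * Real.sqrt (-l))) := Real.exp_pos _
  have hE1 : Real.exp (-2 * k * Real.arsinh (h / 2 * Real.sqrt (-l))) ≤ 1 := by
    rw [hEt]; exact Real.exp_le_one_iff.mpr (by linarith)
  have hElb : 1 - 2 * k * Real.arsinh (h / 2 * Real.sqrt (-l)) ≤
      Real.exp (-2 * k * Real.arsinh (h / 2 * Real.sqrt (-l))) := by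
    rw [hEt]; exact aux_exp_lb
  have hEub : Real.exp (-2 * k * Real.arsinh (h / 2 * Real.sqrt (-l))) ≤
      1 - 2 * k * Real.arsinh (h / 2 * Real.sqrt (-l)) +
        (2 * k * Real.arsinh (h / 2 * Real.sqrt (-l))) ^ 2 := by
    rw [hEt]; exact aux_exp_ub hkt
  obtain ⟨hq0, hqlb, hhq_lb, hhq_ub⟩ := aux_q_facts hh hs0 (s := Real.sqrt (-l))
  constructor
  · exact aux_crude hh hk hs0 hs1 rfl ha0 hax hE0 hE1 hElb hq0 hqlb hhq_lb hhq_ub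
  · intro hx1
    have hax3 : h / 2 * Real.sqrt (-l) - (h / 2 * Real.sqrt (-l)) ^ 3 ≤
        Real.arsinh (h / 2 * Real.sqrt (-l)) := aux_arsinh_ge hx0 hx1
    exact aux_fine hh hk hs0 hs1 rfl ha0 hax hax3 hE0 hE1 hElb hEub hq0 hqlb hhq_lb hhq_ub

lemma aux_summable {r : ℝ} (hr : 1/2 < r) : Summable (fun n : ℤ => (1 + (n:ℝ)^2) ^ (-r)) := by
  have hr0 : (0:ℝ) ≤ r := by linarith
  have hg : Summable (fun n : ℤ => 1 / |(n:ℝ)| ^ (2*r)) := by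
    simpa using (Real.summable_one_div_int_add_rpow 0 (2*r)).mpr (by linarith)
  apply Summable.of_norm_bounded_eventually hg
  rw [Filter.eventually_cofinite]
  apply Set.Finite.subset (Set.finite_singleton (0:ℤ))
  intro n hn
  simp only [Set.mem_setOf_eq] at hn
  simp only [Set.mem_singleton_iff]
  by_contra hne
  apply hn
  have hb : (0:ℝ) < 1 + (n:ℝ)^2 := by positivity
  have hn2 : (1:ℝ) ≤ (n:ℝ)^2 := by
    have h1 : (1:ℤ) ≤ |n| := Int.one_le_abs (by simpa using hne)
    have h2 : (1:ℝ) ≤ |(n:ℝ)| := by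
      calc (1:ℝ) ≤ ((|n| : ℤ) : ℝ) := by exact_mod_cast h1
      _ = |(n:ℝ)| := by push_cast; ring
    nlinarith [abs_nonneg (n:ℝ), sq_abs (n:ℝ)]
  have h2 : |(n:ℝ)| ^ (2*r) = ((n:ℝ)^2) ^ r := by
    rw [← sq_abs, ← Real.rpow_natCast |(n:ℝ)| 2, ← Real.rpow_mul (abs_nonneg _)]
    norm_num [mul_comm]
  have h3 : ((n:ℝ)^2) ^ r ≤ (1 + (n:ℝ)^2) ^ r :=
    Real.rpow_le_rpow (sq_nonneg _) (by linarith) hr0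
  have h4 : (0:ℝ) < ((n:ℝ)^2) ^ r := Real.rpow_pos_of_pos (by nlinarith) _
  rw [Real.norm_eq_abs, abs_of_nonneg (Real.rpow_nonneg hb.le _), Real.rpow_neg hb.le, h2,
    one_div]
  exact inv_anti₀ h4 h3

/-- As `λ → 0⁻`, the weighted square-summed difference between the boundary
resolvent kernel, the singular kernel `h/(2√(−λ))` and the kernel `−(h²/2)|n−m|` tends to `0`. -/
theorem stmt_9 (h ν : ℝ) (hh : 0 < h) (hν : 3 < ν) :
    Tendsto
      (fun l : ℝ => ∑' p : ℤ × ℤ,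
        (1 + (p.1 : ℝ) ^ 2) ^ (-(ν / 2)) * (1 + (p.2 : ℝ) ^ 2) ^ (-(ν / 2)) *
          (Real.exp (-2 * ((|p.1 - p.2| : ℤ) : ℝ) * Real.arsinh (h / 2 * Real.sqrt (-l))) /
              (Real.sqrt (-l) * Real.sqrt (4 / h ^ 2 - l)) -
            h / (2 * Real.sqrt (-l)) + h ^ 2 / 2 * ((|p.1 - p.2| : ℤ) : ℝ)) ^ 2)
      (nhdsWithin 0 (Set.Iio 0)) (nhds 0) := by
  have hν2 : (1:ℝ)/2 < ν/2 := by linarith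
  have hν3 : (1:ℝ)/2 < ν/2 - 1 := by linarith
  set u : ℤ → ℝ := fun n => (1 + (n:ℝ)^2) ^ (-(ν/2)) with hu_def
  set v : ℤ → ℝ := fun n => (1 + (n:ℝ)^2) ^ (-(ν/2 - 1)) with hv_def
  have hu : Summable u := aux_summable hν2
  have hv : Summable v := aux_summable hν3
  have hu0 : ∀ n, 0 ≤ u n := fun n => Real.rpow_nonneg (by positivity) _
  have hv0 : ∀ n, 0 ≤ v n := fun n => Real.rpow_nonneg (by positivity) _
  have hnv : ∀ n : ℤ, (n:ℝ)^2 * u n ≤ v n := by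
    intro n
    have hb : (0:ℝ) < 1 + (n:ℝ)^2 := by positivity
    have h1 : (1 + (n:ℝ)^2) * u n = v n := by
      rw [hu_def, hv_def]
      simp only
      rw [show -(ν/2 - 1) = 1 + -(ν/2) by ring, Real.rpow_add hb, Real.rpow_one]
    nlinarith [hu0 n]
  have hk0 : ∀ p : ℤ × ℤ, (0:ℝ) ≤ ((|p.1 - p.2| : ℤ) : ℝ) := by
    intro p; exact_mod_cast abs_nonneg (p.1 - p.2)
  have hksq : ∀ p : ℤ × ℤ, (((|p.1 - p.2| : ℤ) : ℝ))^2 ≤ 2*(p.1:ℝ)^2 + 2*(p.2:ℝ)^2 := by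
    intro p
    have h1 : (((|p.1 - p.2| : ℤ) : ℝ))^2 = ((p.1:ℝ) - (p.2:ℝ))^2 := by
      push_cast [Int.cast_abs]
      rw [sq_abs]
    rw [h1]; nlinarith [sq_nonneg ((p.1:ℝ) + (p.2:ℝ))]
  have hbound_sum : Summable (fun p : ℤ × ℤ =>
      2*(h^3/16)^2 * (u p.1 * u p.2) + 4*h^4 * (v p.1 * u p.2) + 4*h^4 * (u p.1 * v p.2)) :=
    ((((hu.mul_of_nonneg hu hu0 hu0).mul_left _).add
      ((hv.mul_of_nonneg hu hv0 hu0).mul_left _)).add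
      ((hu.mul_of_nonneg hv hu0 hv0).mul_left _))
  have key := tendsto_tsum_of_dominated_convergence
    (𝓕 := nhdsWithin (0:ℝ) (Set.Iio 0))
    (f := fun (l:ℝ) (p : ℤ × ℤ) =>
      u p.1 * u p.2 *
        (Real.exp (-2 * ((|p.1 - p.2| : ℤ) : ℝ) * Real.arsinh (h / 2 * Real.sqrt (-l))) /
            (Real.sqrt (-l) * Real.sqrt (4 / h ^ 2 - l)) -
          h / (2 * Real.sqrt (-l)) + h ^ 2 / 2 * ((|p.1 - p.2| : ℤ) : ℝ)) ^ 2)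
    (g := fun _ => (0:ℝ)) hbound_sum ?_ ?_
  · simpa using key
  · -- pointwise limits
    intro p
    have hW0 : 0 ≤ u p.1 * u p.2 := mul_nonneg (hu0 _) (hu0 _)
    apply squeeze_zero_norm' (a := fun l : ℝ => u p.1 * u p.2 *
      (h^3/16 + h^3*(((|p.1 - p.2| : ℤ):ℝ))^2/2 + h^4*(((|p.1 - p.2| : ℤ):ℝ))/8)^2 * (-l))
    · have hδ : 0 < min 1 (4/h^2) := by positivity
      filter_upwards [Ioo_mem_nhdsLT_of_mem
        (show (0:ℝ) ∈ Set.Ioc (-(min 1 (4/h^2))) 0 from ⟨by linarith, le_refl 0⟩)] with l hl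
      obtain ⟨hl0, hl1⟩ := hl
      have hl1' : -1 ≤ l := by
        have := min_le_left (1:ℝ) (4/h^2)
        linarith
      have h5 : Real.sqrt (-l) ≤ 2/h := by
        rw [show (2:ℝ)/h = Real.sqrt ((2/h)^2) from (Real.sqrt_sq (by positivity)).symm]
        apply Real.sqrt_le_sqrt
        have hmin := min_le_right (1:ℝ) (4/h^2)
        rw [div_pow]
        norm_num
        linarith
      have hx1 : h/2 * Real.sqrt (-l) ≤ 1 := by
        calc h/2 * Real.sqrt (-l) ≤ h/2 * (2/h) :=
          mul_le_mul_of_nonneg_left h5 (by positivity)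
        _ = 1 := by field_simp
      have hfine := (aux_wrap h _ hh (hk0 p) hl1 hl1').2 hx1
      have hsq' : Real.sqrt (-l) ^ 2 = -l := Real.sq_sqrt (by linarith)
      rw [Real.norm_eq_abs, abs_of_nonneg (mul_nonneg hW0 (sq_nonneg _))]
      have hmid : u p.1 * u p.2 *
          ((h^3/16 + h^3*(((|p.1 - p.2| : ℤ):ℝ))^2/2 + h^4*(((|p.1 - p.2| : ℤ):ℝ))/8) *
            Real.sqrt (-l)) ^ 2 =
          u p.1 * u p.2 *
          (h^3/16 + h^3*(((|p.1 - p.2| : ℤ):ℝ))^2/2 + h^4*(((|p.1 - p.2| : ℤ):ℝ))/8)^2 * (-l) := by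
        rw [mul_pow, hsq']; ring
      refine le_trans (mul_le_mul_of_nonneg_left ?_ hW0) (le_of_eq hmid)
      rw [← sq_abs]
      exact pow_le_pow_left₀ (abs_nonneg _) hfine 2
    · apply Filter.Tendsto.mono_left _ nhdsWithin_le_nhds
      have hcont : Continuous (fun l : ℝ => u p.1 * u p.2 *
          (h^3/16 + h^3*(((|p.1 - p.2| : ℤ):ℝ))^2/2 + h^4*(((|p.1 - p.2| : ℤ):ℝ))/8)^2 * (-l)) :=
        (continuous_const.mul continuous_neg)
      simpa using hcont.tendsto 0
  · -- eventual bound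
    filter_upwards [Ioo_mem_nhdsLT_of_mem
      (show (0:ℝ) ∈ Set.Ioc (-1) 0 from ⟨by norm_num, le_refl 0⟩)] with l hl p
    obtain ⟨hl0, hl1⟩ := hl
    have hcrude := (aux_wrap h _ hh (hk0 p) hl1 hl0.le).1
    have hW0 : 0 ≤ u p.1 * u p.2 := mul_nonneg (hu0 _) (hu0 _)
    rw [Real.norm_eq_abs, abs_of_nonneg (mul_nonneg hW0 (sq_nonneg _))]
    have hF2 :
        (Real.exp (-2 * ((|p.1 - p.2| : ℤ) : ℝ) * Real.arsinh (h / 2 * Real.sqrt (-l))) /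
            (Real.sqrt (-l) * Real.sqrt (4 / h ^ 2 - l)) -
          h / (2 * Real.sqrt (-l)) + h ^ 2 / 2 * ((|p.1 - p.2| : ℤ) : ℝ)) ^ 2 ≤
        (h^3/16 + h^2 * ((|p.1 - p.2| : ℤ) : ℝ))^2 := by
      rw [← sq_abs]
      exact pow_le_pow_left₀ (abs_nonneg _) hcrude 2
    refine le_trans (mul_le_mul_of_nonneg_left hF2 hW0) ?_
    have e1 : (p.1:ℝ)^2 * u p.1 * u p.2 ≤ v p.1 * u p.2 :=
      mul_le_mul_of_nonneg_right (hnv p.1) (hu0 p.2)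
    have e2 : u p.1 * ((p.2:ℝ)^2 * u p.2) ≤ u p.1 * v p.2 :=
      mul_le_mul_of_nonneg_left (hnv p.2) (hu0 p.1)
    have t0 : (0:ℝ) ≤ h^4 := by positivity
    have t1 : (((|p.1 - p.2| : ℤ) : ℝ))^2*(u p.1*u p.2) ≤
        (2*(p.1:ℝ)^2 + 2*(p.2:ℝ)^2)*(u p.1*u p.2) :=
      mul_le_mul_of_nonneg_right (hksq p) hW0
    have t2 := mul_le_mul_of_nonneg_left t1 t0
    have t3 : (0:ℝ) ≤ ((h^3/16) - h^2*(((|p.1 - p.2| : ℤ) : ℝ)))^2 * (u p.1 * u p.2) :=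
      mul_nonneg (sq_nonneg _) hW0
    have t4 := mul_le_mul_of_nonneg_left e1 t0
    have t5 := mul_le_mul_of_nonneg_left e2 t0
    nlinarith [t2, t3, t4, t5]
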